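/- A probability measure μ on ℝ satisfies the recursive distributional equation X =_d 1{V ≤ U}·U·X + 1{V > U}·(1−U)·X′ + U·(1−U) (where U, V, X, X′ are independent, U and V are uniformly distributed on [0,1], and X, X′ are both distributed according to μ) if and only if μ satisfies the recursive distributional equation X =_d √U·X + √U·(1−√U) (where X and U are independent, X ∼ μ, and U is uniformly distributed on [0,1]). -/

import Mathlib

open MeasureTheory

noncomputable section

/-- The uniform distribution on `[0,1]`. -/
def unif : Measure ℝ := volume.restrict (Set.Icc 0 1)

/-- The map `(x, u) ↦ √u·x + √u·(1 − √u)`. -/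
def rdeMap (q : ℝ × ℝ) : ℝ :=
  Real.sqrt q.2 * q.1 + Real.sqrt q.2 * (1 - Real.sqrt q.2)

/-- The map `((x, x'), (u, v)) ↦ 1{v ≤ u}·u·x + 1{v > u}·(1−u)·x' + u·(1−u)`. -/
def rdeMap2 (q : (ℝ × ℝ) × ℝ × ℝ) : ℝ :=
  (if q.2.2 ≤ q.2.1 then q.2.1 * q.1.1 else (1 - q.2.1) * q.1.2) + q.2.1 * (1 - q.2.1)

open Set ENNReal

instance : IsProbabilityMeasure unif :=
  ⟨by simp [unif, Real.volume_Icc]⟩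

lemma measurable_rdeMap : Measurable rdeMap := by
  unfold rdeMap
  fun_prop

lemma measurable_rdeMap2 : Measurable rdeMap2 := by
  unfold rdeMap2
  apply Measurable.add
  · exact Measurable.ite (measurableSet_le measurable_snd.snd measurable_snd.fst)
      (measurable_snd.fst.mul measurable_fst.fst)
      ((measurable_const.sub measurable_snd.fst).mul measurable_fst.snd)
  · exact measurable_snd.fst.mul (measurable_const.sub measurable_snd.fst)

/-- One-dimensional change of variables for lintegrals. -/
lemma lint_image {s : Set ℝ} {f f' : ℝ → ℝ} (hs : MeasurableSet s)
    (hf' : ∀ x ∈ s, HasDerivWithinAt f (f' x) s x) (hf : Set.InjOn f s) (g : ℝ → ℝ≥0∞) :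
    ∫⁻ x in f '' s, g x = ∫⁻ x in s, ENNReal.ofReal |f' x| * g (f x) := by
  simpa only [ContinuousLinearMap.det_toSpanSingleton] using
    lintegral_image_eq_lintegral_abs_det_fderiv_mul volume hs
      (fun x hx => (hf' x hx).hasFDerivWithinAt) hf g

/-- Reflection invariance of the uniform distribution. -/
lemma lintegral_reflect (G : ℝ → ℝ≥0∞) :
    ∫⁻ u in Icc (0:ℝ) 1, G (1 - u) = ∫⁻ u in Icc (0:ℝ) 1, G u := by
  have himg : (fun x : ℝ => 1 - x) '' Icc 0 1 = Icc 0 1 := by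
    rw [Set.image_const_sub_Icc]; norm_num
  have h := lint_image (s := Icc (0:ℝ) 1) (f := fun x : ℝ => 1 - x) (f' := fun _ => -1) measurableSet_Icc
    (fun x _ => ((hasDerivAt_id x).const_sub 1).hasDerivWithinAt)
    (fun a _ b _ h => by dsimp at h; linarith) G
  rw [himg] at h
  rw [h]
  simp

/-- Change of variables `u = s²` for the uniform distribution. -/
lemma lintegral_sqrt (G : ℝ → ℝ≥0∞) :
    ∫⁻ u in Icc (0:ℝ) 1, G (Real.sqrt u) =
      ∫⁻ u in Icc (0:ℝ) 1, ENNReal.ofReal (2 * u) * G u := by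
  have himg : (fun x : ℝ => x ^ 2) '' Icc 0 1 = Icc 0 1 := by
    ext y
    simp only [Set.mem_image, Set.mem_Icc]
    constructor
    · rintro ⟨x, ⟨hx0, hx1⟩, rfl⟩
      constructor <;> nlinarith
    · rintro ⟨h0, h1⟩
      exact ⟨Real.sqrt y, ⟨Real.sqrt_nonneg y, Real.sqrt_le_one.mpr h1⟩, Real.sq_sqrt h0⟩
  have hinj : Set.InjOn (fun x : ℝ => x ^ 2) (Icc 0 1) := by
    rintro a ⟨ha0, _⟩ b ⟨hb0, _⟩ h
    dsimp at h
    rcases mul_eq_zero.1 (show (a - b) * (a + b) = 0 by nlinarith) with h' | h'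
    · linarith
    · nlinarith
  have h := lint_image (s := Icc (0:ℝ) 1) (f := fun x : ℝ => x ^ 2) (f' := fun x => 2 * x) measurableSet_Icc
    (fun x _ => by simpa using (hasDerivAt_pow 2 x).hasDerivWithinAt) hinj
    (fun u => G (Real.sqrt u))
  rw [himg] at h
  rw [h]
  refine setLIntegral_congr_fun measurableSet_Icc ?_
  rintro x ⟨hx0, _⟩
  beta_reduce
  rw [abs_of_nonneg (by linarith), Real.sqrt_sq hx0]

/-- Integral of a two-valued step function. -/
lemma lintegral_ite_le (ν : Measure ℝ) (u : ℝ) (A B : ℝ≥0∞) :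
    ∫⁻ v, (if v ≤ u then A else B) ∂ν = A * ν (Iic u) + B * ν (Iic u)ᶜ := by
  have : (fun v => if v ≤ u then A else B) =
      fun v => (Iic u).indicator (fun _ => A) v + (Iic u)ᶜ.indicator (fun _ => B) v := by
    funext v
    by_cases h : v ≤ u
    · simp [Set.indicator_apply, h]
    · simp [Set.indicator_apply, h, not_le.1 h]
  rw [this, lintegral_add_left (measurable_const.indicator measurableSet_Iic),
    lintegral_indicator_const measurableSet_Iic,
    lintegral_indicator_const measurableSet_Iic.compl]

lemma unif_Iic {u : ℝ} (h0 : 0 ≤ u) (h1 : u ≤ 1) : unif (Iic u) = ENNReal.ofReal u := by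
  rw [unif, Measure.restrict_apply measurableSet_Iic]
  have : Iic u ∩ Icc 0 1 = Icc 0 u := by
    ext x
    simp only [Set.mem_inter_iff, Set.mem_Iic, Set.mem_Icc]
    constructor
    · rintro ⟨h, h', _⟩; exact ⟨h', h⟩
    · rintro ⟨h, h'⟩; exact ⟨h', h, by linarith⟩
  rw [this, Real.volume_Icc]
  norm_num

lemma unif_Iic_compl {u : ℝ} (h0 : 0 ≤ u) (h1 : u ≤ 1) :
    unif (Iic u)ᶜ = ENNReal.ofReal (1 - u) := by
  rw [unif, Measure.restrict_apply measurableSet_Iic.compl, Set.compl_Iic]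
  have : Ioi u ∩ Icc 0 1 = Ioc u 1 := by
    ext x
    simp only [Set.mem_inter_iff, Set.mem_Ioi, Set.mem_Icc, Set.mem_Ioc]
    constructor
    · rintro ⟨h, _, h''⟩; exact ⟨h, h''⟩
    · rintro ⟨h, h'⟩; exact ⟨h, by linarith, h'⟩
  rw [this, Real.volume_Ioc]

/-- The key identity: the two RDE maps have the same pushforward. -/
lemma key_identity (μ : Measure ℝ) [IsProbabilityMeasure μ] (F : ℝ → ℝ≥0∞)
    (hF : Measurable F) :
    ∫⁻ q, F (rdeMap2 q) ∂((μ.prod μ).prod (unif.prod unif)) =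
      ∫⁻ q, F (rdeMap q) ∂(μ.prod unif) := by
  -- the common kernel
  set K : ℝ → ℝ≥0∞ := fun x => ∫⁻ u in Icc (0:ℝ) 1,
    F (u * x + u * (1 - u)) * ENNReal.ofReal u with hK
  have hmeas_inner : Measurable fun p : ℝ × ℝ => F (p.2 * p.1 + p.2 * (1 - p.2)) := by
    apply hF.comp; fun_prop
  have hKmeas : Measurable K := by
    have hm : Measurable fun p : ℝ × ℝ =>
        F (p.2 * p.1 + p.2 * (1 - p.2)) * ENNReal.ofReal p.2 :=
      (hF.comp (by fun_prop)).mul (ENNReal.measurable_ofReal.comp measurable_snd)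
    exact hm.lintegral_prod_right'
  have hμuniv : μ univ = 1 := measure_univ
  -- RHS
  have hRHS : ∫⁻ q, F (rdeMap q) ∂(μ.prod unif) = ∫⁻ x, 2 * K x ∂μ := by
    have hae : AEMeasurable (fun q : ℝ × ℝ => F (rdeMap q)) (μ.prod unif) :=
      (hF.comp measurable_rdeMap).aemeasurable
    rw [lintegral_prod _ hae]
    refine lintegral_congr fun x => ?_
    have : ∀ u : ℝ, F (rdeMap (x, u)) =
        (fun s => F (s * x + s * (1 - s))) (Real.sqrt u) := by
      intro u; simp [rdeMap]
    calc ∫⁻ u, F (rdeMap (x, u)) ∂unif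
        = ∫⁻ u in Icc (0:ℝ) 1, (fun s => F (s * x + s * (1 - s))) (Real.sqrt u) := by
          rw [unif]; exact lintegral_congr fun u => by rw [this u]
      _ = ∫⁻ u in Icc (0:ℝ) 1, ENNReal.ofReal (2 * u) * F (u * x + u * (1 - u)) := by
          simpa using lintegral_sqrt (fun s => F (s * x + s * (1 - s)))
      _ = ∫⁻ u in Icc (0:ℝ) 1, 2 * (F (u * x + u * (1 - u)) * ENNReal.ofReal u) := by
          refine lintegral_congr fun u => ?_
          rw [ENNReal.ofReal_mul (by norm_num)]
          norm_num
          ring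
      _ = 2 * K x := lintegral_const_mul 2 (by
          apply Measurable.mul
          · exact hF.comp (by fun_prop)
          · exact ENNReal.measurable_ofReal)
  -- LHS
  have hLHS : ∫⁻ q, F (rdeMap2 q) ∂((μ.prod μ).prod (unif.prod unif)) =
      ∫⁻ p : ℝ × ℝ, (K p.1 + K p.2) ∂(μ.prod μ) := by
    have hae : AEMeasurable (fun q : (ℝ × ℝ) × ℝ × ℝ => F (rdeMap2 q))
        ((μ.prod μ).prod (unif.prod unif)) := (hF.comp measurable_rdeMap2).aemeasurable
    rw [lintegral_prod _ hae]
    refine lintegral_congr fun p => ?_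
    obtain ⟨x, x'⟩ := p
    have hmeas2 : Measurable fun w : ℝ × ℝ => F (rdeMap2 ((x, x'), w)) :=
      (hF.comp measurable_rdeMap2).comp (f := fun w : ℝ × ℝ => ((x, x'), w)) (by fun_prop)
    rw [lintegral_prod _ hmeas2.aemeasurable]
    have step1 : ∀ u : ℝ, ∫⁻ v, F (rdeMap2 ((x, x'), (u, v))) ∂unif =
        F (u * x + u * (1 - u)) * unif (Iic u) +
          F ((1 - u) * x' + u * (1 - u)) * unif (Iic u)ᶜ := by
      intro u
      have : ∀ v : ℝ, F (rdeMap2 ((x, x'), (u, v))) =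
          if v ≤ u then F (u * x + u * (1 - u)) else F ((1 - u) * x' + u * (1 - u)) := by
        intro v
        simp only [rdeMap2]
        by_cases h : v ≤ u <;> simp [h]
      calc ∫⁻ v, F (rdeMap2 ((x, x'), (u, v))) ∂unif
          = ∫⁻ v, (if v ≤ u then F (u * x + u * (1 - u))
              else F ((1 - u) * x' + u * (1 - u))) ∂unif :=
            lintegral_congr fun v => this v
        _ = _ := lintegral_ite_le unif u _ _
    calc ∫⁻ u, ∫⁻ v, F (rdeMap2 ((x, x'), (u, v))) ∂unif ∂unif
        = ∫⁻ u in Icc (0:ℝ) 1,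
            (F (u * x + u * (1 - u)) * unif (Iic u) +
              F ((1 - u) * x' + u * (1 - u)) * unif (Iic u)ᶜ) := by
          rw [unif]; exact lintegral_congr fun u => step1 u
      _ = ∫⁻ u in Icc (0:ℝ) 1,
            (F (u * x + u * (1 - u)) * ENNReal.ofReal u +
              F ((1 - u) * x' + u * (1 - u)) * ENNReal.ofReal (1 - u)) := by
          refine setLIntegral_congr_fun measurableSet_Icc ?_
          rintro u ⟨h0, h1⟩
          beta_reduce
          rw [unif_Iic h0 h1, unif_Iic_compl h0 h1]
      _ = (∫⁻ u in Icc (0:ℝ) 1, F (u * x + u * (1 - u)) * ENNReal.ofReal u) +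
            ∫⁻ u in Icc (0:ℝ) 1, F ((1 - u) * x' + u * (1 - u)) * ENNReal.ofReal (1 - u) := by
          apply lintegral_add_left
          exact (hF.comp (by fun_prop)).mul (ENNReal.measurable_ofReal.comp (by fun_prop))
      _ = K x + K x' := by
          congr 1
          have hrefl := lintegral_reflect (fun u => F (u * x' + u * (1 - u)) * ENNReal.ofReal u)
          simp only [hK]
          rw [← hrefl]
          refine setLIntegral_congr_fun measurableSet_Icc ?_
          intro u _
          congr 2
          ring
  rw [hLHS, hRHS]
  rw [lintegral_add_left (show Measurable fun p : ℝ × ℝ => K p.1 from hKmeas.comp measurable_fst)]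
  have h1 : ∫⁻ p : ℝ × ℝ, K p.1 ∂(μ.prod μ) = ∫⁻ x, K x ∂μ := by
    rw [← lintegral_map hKmeas measurable_fst, Measure.map_fst_prod, hμuniv, one_smul]
  have h2 : ∫⁻ p : ℝ × ℝ, K p.2 ∂(μ.prod μ) = ∫⁻ x, K x ∂μ := by
    rw [← lintegral_map hKmeas measurable_snd, Measure.map_snd_prod, hμuniv, one_smul]
  rw [h1, h2, lintegral_const_mul 2 hKmeas, two_mul]

/-- A probability measure `μ` on `ℝ` satisfies the recursive distributional equation
`X =_d 1{V ≤ U}·U·X + 1{V > U}·(1−U)·X′ + U·(1−U)` (with `U, V, X, X′` independent, `U, V`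
uniform on `[0,1]` and `X, X′ ∼ μ`) if and only if it satisfies the recursive distributional
equation `X =_d √U·X + √U·(1−√U)` (with `X, U` independent, `X ∼ μ`, `U` uniform). -/
theorem rde_equivalence (μ : Measure ℝ) (hμ : IsProbabilityMeasure μ) :
    Measure.map rdeMap2 ((μ.prod μ).prod (unif.prod unif)) = μ ↔
      Measure.map rdeMap (μ.prod unif) = μ := by
  haveI := hμ
  have main : Measure.map rdeMap2 ((μ.prod μ).prod (unif.prod unif)) =
      Measure.map rdeMap (μ.prod unif) := by
    ext s hs
    rw [Measure.map_apply measurable_rdeMap2 hs, Measure.map_apply measurable_rdeMap hs,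
      ← lintegral_indicator_one (measurable_rdeMap2 hs),
      ← lintegral_indicator_one (measurable_rdeMap hs)]
    have e2 : ∫⁻ q, (rdeMap2 ⁻¹' s).indicator 1 q ∂((μ.prod μ).prod (unif.prod unif)) =
        ∫⁻ q, s.indicator 1 (rdeMap2 q) ∂((μ.prod μ).prod (unif.prod unif)) :=
      lintegral_congr fun q => by
        by_cases h : rdeMap2 q ∈ s <;> simp [Set.indicator_apply, h]
    have e1 : ∫⁻ q, (rdeMap ⁻¹' s).indicator 1 q ∂(μ.prod unif) =
        ∫⁻ q, s.indicator 1 (rdeMap q) ∂(μ.prod unif) :=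
      lintegral_congr fun q => by
        by_cases h : rdeMap q ∈ s <;> simp [Set.indicator_apply, h]
    rw [e1, e2]
    exact key_identity μ (s.indicator 1) (measurable_one.indicator hs)
  rw [main]
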